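/- For every odd integer n ≥ 3, the multiset of eigenvalues (with multiplicity) of the adjacency matrix of the Hecke graph G4(n) equals the multiset union of sp3(n) and −sp3(n) = {−λ : λ ∈ sp3(n)}. The same holds for G6(n) for every integer n ≥ 2 not divisible by 3. -/

import Mathlib

/-- The equivalence relation identifying `(a,c)` with `(-a,-c)` on the set of pairs of
elements of `ℤ/nℤ` generating the unit ideal. -/
def FareySetoid (n : ℕ) : Setoid {p : ZMod n × ZMod n // IsCoprime p.1 p.2} where
  r p q := p.1 = q.1 ∨ p.1 = -q.1
  iseqv := by
    constructor
    · intro p; exact Or.inl rfl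
    · rintro p q (h | h)
      · exact Or.inl h.symm
      · right; rw [h, neg_neg]
    · rintro p q s (h1 | h1) (h2 | h2)
      · exact Or.inl (h1.trans h2)
      · right; rw [h1, h2]
      · right; rw [h1, h2]
      · left; rw [h1, h2, neg_neg]

/-- The vertices of the Farey graph `G3(n)`: classes `[a:c]` of pairs `(a,c) ∈ (ℤ/nℤ)²`
generating the unit ideal, with `(a,c) ~ (-a,-c)`. -/
def FareyVertex (n : ℕ) := Quotient (FareySetoid n)

/-- The vertex `[a:c]` of the Farey graph. -/
def FareyVertex.mk (n : ℕ) (a c : ZMod n) (h : IsCoprime a c) : FareyVertex n :=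
  Quotient.mk (FareySetoid n) ⟨(a, c), h⟩

/-- The Farey graph `G3(n)`: vertices `[a:c]` and `[b:d]` are adjacent iff
`ad - bc ≡ ±1 (mod n)`. -/
def FareyGraph (n : ℕ) : SimpleGraph (FareyVertex n) where
  Adj u v := u ≠ v ∧ ∃ a c b d : ZMod n,
    (∃ h, u = FareyVertex.mk n a c h) ∧ (∃ h, v = FareyVertex.mk n b d h) ∧
    (a * d - b * c = 1 ∨ a * d - b * c = -1)
  symm := by
    constructor
    rintro u v ⟨hne, a, c, b, d, hu, hv, h⟩
    refine ⟨hne.symm, b, d, a, c, hv, hu, ?_⟩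
    rcases h with h | h
    · right; linear_combination -h
    · left; linear_combination -h
  loopless := ⟨fun u h => h.1 rfl⟩

instance (n : ℕ) [NeZero n] : Finite (FareyVertex n) := Quotient.finite _

/-- A pair of integers `b, d` with `gcd(b, d, n) = 1` yields a pair generating the unit
ideal of `ℤ/nℤ`. -/
lemma isCoprime_zmod_of_gcd {n : ℕ} {b d : ℤ} (h : Int.gcd b (Int.gcd d n) = 1) :
    IsCoprime (b : ZMod n) (d : ZMod n) := by
  obtain ⟨u, v, huv⟩ := Int.isCoprime_iff_gcd_eq_one.mpr h
  have hgcd : ((Int.gcd d n : ℕ) : ℤ) = d * Int.gcdA d n + n * Int.gcdB d n :=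
    Int.gcd_eq_gcd_ab d (n : ℤ)
  refine ⟨(u : ZMod n), ((v * Int.gcdA d (n : ℤ) : ℤ) : ZMod n), ?_⟩
  have huv' : u * b + (v * Int.gcdA d (n : ℤ)) * d + (v * Int.gcdB d (n : ℤ)) * n = 1 := by
    rw [← huv, hgcd]; ring
  have := congrArg (fun z : ℤ => (z : ZMod n)) huv'
  push_cast at this
  rw [ZMod.natCast_self] at this
  push_cast
  linear_combination this
/-- The vertex `[b:d]` of `G3(n)` determined by integers `b`, `d` with `gcd(b,d,n) = 1`. -/
def FareyVertex.ofInt (n : ℕ) (b d : ℤ) (h : Int.gcd b (Int.gcd d n) = 1) : FareyVertex n :=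
  FareyVertex.mk n (b : ZMod n) (d : ZMod n) (isCoprime_zmod_of_gcd h)

/-- The number of vertices of the Farey graph `G3(n)`. -/
noncomputable def fareyCard (n : ℕ) : ℕ := Nat.card (FareyVertex n)

/-- The characteristic polynomial of the (real) adjacency matrix of the Farey
graph `G3(n)` (junk value `1` for `n = 0`). -/
noncomputable def fareyCharpoly (n : ℕ) : Polynomial ℝ :=
  if h : n = 0 then 1
  else
    letI : NeZero n := ⟨h⟩
    letI : Fintype (FareyVertex n) := Fintype.ofFinite _
    letI : DecidableEq (FareyVertex n) := Classical.decEq _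
    letI : DecidableRel (FareyGraph n).Adj := Classical.decRel _
    Matrix.charpoly ((FareyGraph n).adjMatrix ℝ)

/-- The spectrum of the Farey graph `G3(n)`: the multiset of real roots, with
multiplicity, of the characteristic polynomial of its adjacency matrix. -/
noncomputable def sp3 (n : ℕ) : Multiset ℝ := (fareyCharpoly n).roots

open Sum in
/-- The Hecke graph of level `n` with parameter `t` (the graphs `G4(n)` and `G6(n)` are
obtained for `t = 2` and `t = 3` respectively): the vertex set consists of two disjoint
copies of the vertices of `G3(n)` (even vertices `inl [a:c]` and odd vertices
`inr [b:d]`); an even vertex `[a:c]` and an odd vertex `[b:d]` are adjacent iff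
`ad - t·bc ≡ ±1 (mod n)`, and no two vertices of the same parity are adjacent. -/
def HeckeGraph (n : ℕ) (t : ℤ) : SimpleGraph (FareyVertex n ⊕ FareyVertex n) where
  Adj u v :=
    (∃ a c b d : ZMod n,
      (∃ h, u = inl (FareyVertex.mk n a c h)) ∧ (∃ h, v = inr (FareyVertex.mk n b d h)) ∧
      (a * d - (t : ZMod n) * (b * c) = 1 ∨ a * d - (t : ZMod n) * (b * c) = -1)) ∨
    (∃ a c b d : ZMod n,
      (∃ h, v = inl (FareyVertex.mk n a c h)) ∧ (∃ h, u = inr (FareyVertex.mk n b d h)) ∧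
      (a * d - (t : ZMod n) * (b * c) = 1 ∨ a * d - (t : ZMod n) * (b * c) = -1))
  symm := by
    constructor
    rintro u v (h | h)
    · exact Or.inr h
    · exact Or.inl h
  loopless := by
    constructor
    rintro u (⟨a, c, b, d, ⟨h₁, hu⟩, ⟨h₂, hv⟩, -⟩ | ⟨a, c, b, d, ⟨h₁, hv⟩, ⟨h₂, hu⟩, -⟩) <;>
      rw [hu] at hv
    · exact inl_ne_inr hv
    · exact inr_ne_inl hv

/-- The characteristic polynomial of the (real) adjacency matrix of the Hecke graph of
level `n` with parameter `t` (junk value `1` for `n = 0`). -/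
noncomputable def heckeCharpoly (n : ℕ) (t : ℤ) : Polynomial ℝ :=
  if h : n = 0 then 1
  else
    letI : NeZero n := ⟨h⟩
    letI : Fintype (FareyVertex n) := Fintype.ofFinite _
    letI : DecidableEq (FareyVertex n ⊕ FareyVertex n) := Classical.decEq _
    letI : DecidableRel (HeckeGraph n t).Adj := Classical.decRel _
    Matrix.charpoly ((HeckeGraph n t).adjMatrix ℝ)

/-- The spectrum of the Hecke graph of level `n` with parameter `t`: the multiset of real
roots, with multiplicity, of the characteristic polynomial of its adjacency matrix. -/
noncomputable def spHecke (n : ℕ) (t : ℤ) : Multiset ℝ := (heckeCharpoly n t).roots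


section AuxAlg
open Polynomial Matrix

lemma comp_negX_comp_negX {R : Type*} [CommRing R] (p : R[X]) :
    (p.comp (-X)).comp (-X) = p := by
  rw [comp_assoc, neg_comp, X_comp, neg_neg, comp_X]

lemma comp_negX_ne_zero {R : Type*} [CommRing R] {p : R[X]} (hp : p ≠ 0) :
    p.comp (-X) ≠ 0 := by
  intro h
  apply hp
  rw [← comp_negX_comp_negX p, h, zero_comp]

lemma rootMultiplicity_comp_negX_le {R : Type*} [CommRing R] [IsDomain R] {p : R[X]} (hp : p ≠ 0)
    (a : R) : rootMultiplicity (-a) p ≤ rootMultiplicity a (p.comp (-X)) := by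
  rw [le_rootMultiplicity_iff (comp_negX_ne_zero hp)]
  obtain ⟨q, hq⟩ := pow_rootMultiplicity_dvd p (-a)
  refine ⟨(-1 : R[X]) ^ rootMultiplicity (-a) p * q.comp (-X), ?_⟩
  have := congrArg (fun r : R[X] => r.comp (-X)) hq
  simp only [mul_comp, pow_comp, sub_comp, X_comp, C_comp, map_neg, neg_comp] at this
  have h3 : (-X - -C a : R[X]) = (-1) * (X - C a) := by ring
  rw [this, h3, mul_pow]; ring

lemma rootMultiplicity_comp_negX {R : Type*} [CommRing R] [IsDomain R] {p : R[X]} (hp : p ≠ 0)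
    (a : R) : rootMultiplicity a (p.comp (-X)) = rootMultiplicity (-a) p := by
  refine le_antisymm ?_ (rootMultiplicity_comp_negX_le hp a)
  have h2 := rootMultiplicity_comp_negX_le (comp_negX_ne_zero hp) (-a)
  rwa [neg_neg, comp_negX_comp_negX] at h2

lemma roots_comp_negX {R : Type*} [CommRing R] [IsDomain R] (p : R[X]) :
    (p.comp (-X)).roots = p.roots.map (fun x => -x) := by
  classical
  by_cases hp : p = 0
  · simp [hp]
  ext a
  rw [count_roots, rootMultiplicity_comp_negX hp]
  have : a = -(-a) := by ring
  rw [this, Multiset.count_map_eq_count' _ _ neg_injective, count_roots, neg_neg]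

lemma det_fromBlocks_pair {R : Type*} [CommRing R] [IsDomain R] [NeZero (2 : R)]
    {m : Type*} [Fintype m] [DecidableEq m] (P Q : Matrix m m R) :
    (fromBlocks P Q Q P).det = (P + Q).det * (P - Q).det := by
  set T : Matrix (m ⊕ m) (m ⊕ m) R := fromBlocks 1 1 1 (-1) with hT
  have hTT : T * T = fromBlocks ((2:R) • 1) 0 0 ((2:R) • 1) := by
    rw [hT, fromBlocks_multiply]
    congr 1 <;> simp [two_smul]
  have hTMT : T * fromBlocks P Q Q P * T =
      fromBlocks ((2:R) • (P + Q)) 0 0 ((2:R) • (P - Q)) := by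
    rw [hT, fromBlocks_multiply, fromBlocks_multiply]
    congr 1 <;> simp [two_smul] <;> abel_nf <;> simp
  have hdetTT : T.det * T.det = 2 ^ (Fintype.card m) * 2 ^ (Fintype.card m) := by
    rw [← det_mul, hTT, det_fromBlocks_zero₁₂, det_smul, det_one]
    ring
  have h3 : (2:R) ^ (Fintype.card m) * 2 ^ (Fintype.card m) ≠ 0 :=
    mul_ne_zero (pow_ne_zero _ (NeZero.ne _)) (pow_ne_zero _ (NeZero.ne _))
  apply mul_left_cancel₀ h3
  calc (2:R) ^ (Fintype.card m) * 2 ^ (Fintype.card m) * (fromBlocks P Q Q P).det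
      = T.det * (fromBlocks P Q Q P).det * T.det := by rw [← hdetTT]; ring
    _ = (T * fromBlocks P Q Q P * T).det := by rw [det_mul, det_mul]
    _ = ((2:R) • (P + Q)).det * ((2:R) • (P - Q)).det := by
        rw [hTMT, det_fromBlocks_zero₁₂]
    _ = _ := by rw [det_smul, det_smul]; ring

lemma charmatrix_neg {R : Type*} [CommRing R] {m : Type*} [Fintype m] [DecidableEq m]
    (A : Matrix m m R) : charmatrix (-A) = Matrix.scalar m (X : R[X]) + A.map C := by
  rw [charmatrix, map_neg, sub_neg_eq_add, RingHom.mapMatrix_apply]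

lemma charpoly_fromBlocks_pair {m : Type*} [Fintype m] [DecidableEq m]
    (A : Matrix m m ℝ) :
    (fromBlocks 0 A A 0).charpoly = A.charpoly * (-A).charpoly := by
  rw [Matrix.charpoly, charmatrix_fromBlocks]
  have h0 : charmatrix (0 : Matrix m m ℝ) = Matrix.scalar m (X : ℝ[X]) := by
    rw [charmatrix]; simp
  rw [h0, det_fromBlocks_pair]
  rw [Matrix.charpoly, Matrix.charpoly, charmatrix, charmatrix_neg, RingHom.mapMatrix_apply]
  congr 2 <;> abel

lemma charmatrix_map_negX {m : Type*} [Fintype m] [DecidableEq m] (A : Matrix m m ℝ) :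
    (charmatrix A).map (eval₂RingHom C (-X : ℝ[X])) = -(charmatrix (-A)) := by
  ext i j : 2
  by_cases h : i = j
  · subst h
    simp [Matrix.map_apply]
    ring
  · simp [Matrix.map_apply, charmatrix_apply_ne _ _ _ h]

lemma charpoly_neg_roots {m : Type*} [Fintype m] [DecidableEq m] (A : Matrix m m ℝ) :
    (-A).charpoly.roots = A.charpoly.roots.map (fun x => -x) := by
  have key : (A.charpoly).comp (-X) = C ((-1:ℝ)^(Fintype.card m)) * (-A).charpoly := by
    have h1 : (A.charpoly).comp (-X) = eval₂RingHom C (-X : ℝ[X]) A.charpoly := rfl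
    rw [h1, Matrix.charpoly, RingHom.map_det, RingHom.mapMatrix_apply, charmatrix_map_negX,
      det_neg, Matrix.charpoly, Fintype.card]
    congr 1
    rw [map_pow, map_neg, _root_.map_one]
  have hc : ((-1:ℝ)^(Fintype.card m)) ≠ 0 := pow_ne_zero _ (by norm_num)
  have : (-A).charpoly.roots = (C ((-1:ℝ)^(Fintype.card m)) * (-A).charpoly).roots :=
    (roots_C_mul _ hc).symm
  rw [this, ← key, roots_comp_negX]
end AuxAlg
open Polynomial Matrix Sum

namespace Stmt17Aux

variable {n : ℕ}

lemma isCoprime_unit_mul {t b d : ZMod n} (ht : IsUnit t) (h : IsCoprime b d) :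
    IsCoprime (t * b) d := by
  refine IsCoprime.mul_left ⟨↑ht.unit⁻¹, 0, ?_⟩ h
  simp [IsUnit.unit_spec]

def scaleFun (u : (ZMod n)ˣ) (p : {p : ZMod n × ZMod n // IsCoprime p.1 p.2}) :
    {p : ZMod n × ZMod n // IsCoprime p.1 p.2} :=
  ⟨((u : ZMod n) * p.1.1, p.1.2), isCoprime_unit_mul u.isUnit p.2⟩

lemma scaleFun_rel (u : (ZMod n)ˣ) {p q : {p : ZMod n × ZMod n // IsCoprime p.1 p.2}}
    (h : (FareySetoid n).r p q) : (FareySetoid n).r (scaleFun u p) (scaleFun u q) := by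
  rcases h with h | h
  · left; simp [scaleFun, h]
  · right
    have h1 : p.1.1 = -q.1.1 := by rw [h]; rfl
    have h2 : p.1.2 = -q.1.2 := by rw [h]; rfl
    simp [scaleFun, h1, h2, Prod.neg_mk, mul_neg]

def scaleV (u : (ZMod n)ˣ) : FareyVertex n → FareyVertex n :=
  Quotient.map (scaleFun u) (fun _ _ h => scaleFun_rel u h)

lemma scaleV_mk (u : (ZMod n)ˣ) (a c : ZMod n) (h : IsCoprime a c) :
    scaleV u (FareyVertex.mk n a c h) =
      FareyVertex.mk n ((u : ZMod n) * a) c (isCoprime_unit_mul u.isUnit h) := rfl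

lemma scaleV_scaleV (u v : (ZMod n)ˣ) (x : FareyVertex n) :
    scaleV u (scaleV v x) = scaleV (u * v) x := by
  refine Quotient.inductionOn x ?_
  intro p
  apply Quotient.sound
  left
  show (scaleFun u (scaleFun v p)).1 = (scaleFun (u * v) p).1
  simp [scaleFun, mul_assoc]

lemma scaleV_one (x : FareyVertex n) : scaleV 1 x = x := by
  refine Quotient.inductionOn x ?_
  intro p
  apply Quotient.sound
  left
  show (scaleFun 1 p).1 = p.1
  simp [scaleFun]

/-- Multiplication of the first coordinate by a unit, as an equivalence of vertices. -/
def scaleEquiv (u : (ZMod n)ˣ) : FareyVertex n ≃ FareyVertex n where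
  toFun := scaleV u
  invFun := scaleV u⁻¹
  left_inv x := by rw [scaleV_scaleV, inv_mul_cancel, scaleV_one]
  right_inv x := by rw [scaleV_scaleV, mul_inv_cancel, scaleV_one]

lemma mk_eq_mk {a c b d : ZMod n} {h : IsCoprime a c} {h' : IsCoprime b d}
    (heq : FareyVertex.mk n a c h = FareyVertex.mk n b d h') :
    ((a, c) : ZMod n × ZMod n) = (b, d) ∨ ((a, c) : ZMod n × ZMod n) = -(b, d) :=
  Quotient.exact heq

end Stmt17Aux
namespace Stmt17Aux

variable {n : ℕ}

lemma fareyAdj_def {u v : FareyVertex n} :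
    (FareyGraph n).Adj u v ↔ (u ≠ v ∧ ∃ a c b d : ZMod n,
      (∃ h, u = FareyVertex.mk n a c h) ∧ (∃ h, v = FareyVertex.mk n b d h) ∧
      (a * d - b * c = 1 ∨ a * d - b * c = -1)) := Iff.rfl

lemma heckeAdj_def {t : ℤ} {u v : FareyVertex n ⊕ FareyVertex n} :
    (HeckeGraph n t).Adj u v ↔
    ((∃ a c b d : ZMod n,
      (∃ h, u = Sum.inl (FareyVertex.mk n a c h)) ∧
        (∃ h, v = Sum.inr (FareyVertex.mk n b d h)) ∧
      (a * d - (t : ZMod n) * (b * c) = 1 ∨ a * d - (t : ZMod n) * (b * c) = -1)) ∨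
    (∃ a c b d : ZMod n,
      (∃ h, v = Sum.inl (FareyVertex.mk n a c h)) ∧
        (∃ h, u = Sum.inr (FareyVertex.mk n b d h)) ∧
      (a * d - (t : ZMod n) * (b * c) = 1 ∨ a * d - (t : ZMod n) * (b * c) = -1))) := Iff.rfl

lemma not_heckeAdj_inl_inl {t : ℤ} (x y : FareyVertex n) :
    ¬ (HeckeGraph n t).Adj (Sum.inl x) (Sum.inl y) := by
  rw [heckeAdj_def]
  rintro (⟨a, c, b, d, -, ⟨h2, hy⟩, -⟩ | ⟨a, c, b, d, -, ⟨h2, hy⟩, -⟩) <;> exact Sum.inl_ne_inr hy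

lemma not_heckeAdj_inr_inr {t : ℤ} (x y : FareyVertex n) :
    ¬ (HeckeGraph n t).Adj (Sum.inr x) (Sum.inr y) := by
  rw [heckeAdj_def]
  rintro (⟨a, c, b, d, ⟨h1, hy⟩, -, -⟩ | ⟨a, c, b, d, ⟨h1, hy⟩, -, -⟩) <;> exact Sum.inr_ne_inl hy

lemma heckeAdj_inl_inr (hn : 1 < n) (t : ℤ) (u : (ZMod n)ˣ)
    (hu : ((u : ZMod n)) = (t : ZMod n)) (x y : FareyVertex n) :
    (HeckeGraph n t).Adj (Sum.inl x) (Sum.inr y) ↔ (FareyGraph n).Adj x (scaleEquiv u y) := by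
  haveI : Fact (1 < n) := ⟨hn⟩
  rw [heckeAdj_def, fareyAdj_def]
  constructor
  · rintro (⟨a, c, b, d, ⟨h1, hx⟩, ⟨h2, hy⟩, hdet⟩ | ⟨a, c, b, d, -, ⟨h2, hy⟩, -⟩)
    swap
    · exact absurd hy Sum.inl_ne_inr
    injection hx with hx
    injection hy with hy
    have hsy : scaleEquiv u y = FareyVertex.mk n ((u : ZMod n) * b) d
        (isCoprime_unit_mul u.isUnit h2) := by rw [hy]; rfl
    constructor
    · intro heq
      rw [hx] at heq
      rcases mk_eq_mk (heq.trans hsy) with hpq | hpq <;>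
        simp only [Prod.neg_mk, Prod.mk.injEq] at hpq <;> obtain ⟨ha, hc⟩ := hpq
      · rcases hdet with h | h
        · exact one_ne_zero (α := ZMod n)
            (by linear_combination -h + d * ha - (t : ZMod n) * b * hc + b * d * hu)
        · exact one_ne_zero (α := ZMod n)
            (by linear_combination h - d * ha + (t : ZMod n) * b * hc - b * d * hu)
      · rcases hdet with h | h
        · exact one_ne_zero (α := ZMod n)
            (by linear_combination -h + d * ha - (t : ZMod n) * b * hc - b * d * hu)
        · exact one_ne_zero (α := ZMod n)
            (by linear_combination h - d * ha + (t : ZMod n) * b * hc + b * d * hu)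
    · refine ⟨a, c, (u : ZMod n) * b, d, ⟨h1, hx⟩, ⟨_, hsy⟩, ?_⟩
      rcases hdet with h | h
      · exact Or.inl (by linear_combination h - (b * c) * hu)
      · exact Or.inr (by linear_combination h - (b * c) * hu)
  · rintro ⟨hne, a, c, b', d', ⟨h1, hx⟩, ⟨h2, hsy⟩, hdet⟩
    have htu : (t : ZMod n) * ((u⁻¹ : (ZMod n)ˣ) : ZMod n) = 1 := by
      rw [← hu]; exact_mod_cast u.mul_inv
    have hy : y = FareyVertex.mk n (((u⁻¹ : (ZMod n)ˣ) : ZMod n) * b') d'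
        (isCoprime_unit_mul (u⁻¹).isUnit h2) := by
      have h3 := congrArg (scaleEquiv u).symm hsy
      rw [Equiv.symm_apply_apply] at h3
      rw [h3]; rfl
    refine Or.inl ⟨a, c, _, d', ⟨h1, by rw [hx]⟩, ⟨_, by rw [hy]⟩, ?_⟩
    rcases hdet with h | h
    · exact Or.inl (by linear_combination h - (b' * c) * htu)
    · exact Or.inr (by linear_combination h - (b' * c) * htu)

end Stmt17Aux
namespace Stmt17Aux
open Polynomial Matrix

lemma adjMatrix_hecke_submatrix (n : ℕ) (hn : 1 < n) (t : ℤ) (u : (ZMod n)ˣ)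
    (hu : ((u : ZMod n)) = (t : ZMod n))
    [Fintype (FareyVertex n)] [DecidableRel (HeckeGraph n t).Adj]
    [DecidableRel (FareyGraph n).Adj] :
    ((HeckeGraph n t).adjMatrix ℝ).submatrix
        (Equiv.sumCongr (Equiv.refl (FareyVertex n)) (scaleEquiv u).symm)
        (Equiv.sumCongr (Equiv.refl (FareyVertex n)) (scaleEquiv u).symm) =
      fromBlocks 0 ((FareyGraph n).adjMatrix ℝ) ((FareyGraph n).adjMatrix ℝ) 0 := by
  ext i j
  rcases i with x | x <;> rcases j with y | y
  · simp only [submatrix_apply, Equiv.sumCongr_apply, Sum.map_inl, Equiv.coe_refl, id,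
      fromBlocks_apply₁₁, SimpleGraph.adjMatrix_apply, Matrix.zero_apply]
    exact if_neg (not_heckeAdj_inl_inl x y)
  · simp only [submatrix_apply, Equiv.sumCongr_apply, Sum.map_inl, Sum.map_inr, Equiv.coe_refl,
      id, fromBlocks_apply₁₂, SimpleGraph.adjMatrix_apply]
    refine if_congr ?_ rfl rfl
    rw [heckeAdj_inl_inr hn t u hu x ((scaleEquiv u).symm y), Equiv.apply_symm_apply]
  · simp only [submatrix_apply, Equiv.sumCongr_apply, Sum.map_inl, Sum.map_inr, Equiv.coe_refl,
      id, fromBlocks_apply₂₁, SimpleGraph.adjMatrix_apply]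
    refine if_congr ?_ rfl rfl
    rw [SimpleGraph.adj_comm, heckeAdj_inl_inr hn t u hu y ((scaleEquiv u).symm x),
      Equiv.apply_symm_apply, SimpleGraph.adj_comm]
  · simp only [submatrix_apply, Equiv.sumCongr_apply, Sum.map_inr, Equiv.coe_refl, id,
      fromBlocks_apply₂₂, SimpleGraph.adjMatrix_apply, Matrix.zero_apply]
    exact if_neg (not_heckeAdj_inr_inr _ _)

lemma charpoly_congr_inst {m : Type*} {R : Type*} [CommRing R] [Fintype m]
    (i1 i2 : DecidableEq m) (M : Matrix m m R) :
    @Matrix.charpoly R _ m i1 _ M = @Matrix.charpoly R _ m i2 _ M := by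
  rw [Subsingleton.elim i1 i2]

set_option maxHeartbeats 1000000 in
lemma key (n : ℕ) (hn : 1 < n) (t : ℤ) (u : (ZMod n)ˣ)
    (hu : ((u : ZMod n)) = (t : ZMod n))
    (iF : Fintype (FareyVertex n)) (iDS : DecidableEq (FareyVertex n ⊕ FareyVertex n))
    (iRH : DecidableRel (HeckeGraph n t).Adj) (iDF : DecidableEq (FareyVertex n))
    (iRF : DecidableRel (FareyGraph n).Adj) :
    (@Matrix.charpoly ℝ _ _ iDS _ ((HeckeGraph n t).adjMatrix ℝ)).roots =
      (Matrix.charpoly ((FareyGraph n).adjMatrix ℝ)).roots +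
      (Matrix.charpoly ((FareyGraph n).adjMatrix ℝ)).roots.map (fun lam => -lam) := by
  set A := (FareyGraph n).adjMatrix ℝ with hA
  set e := Equiv.sumCongr (Equiv.refl (FareyVertex n)) (scaleEquiv (n := n) u).symm with he
  have hsub : ((HeckeGraph n t).adjMatrix ℝ).submatrix e e = fromBlocks 0 A A 0 :=
    adjMatrix_hecke_submatrix n hn t u hu
  have hre : reindex e.symm e.symm ((HeckeGraph n t).adjMatrix ℝ) = fromBlocks 0 A A 0 := by
    rw [reindex_apply, Equiv.symm_symm, hsub]
  have h1 : @Matrix.charpoly ℝ _ _ iDS _ ((HeckeGraph n t).adjMatrix ℝ)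
      = A.charpoly * (-A).charpoly :=
    (@Matrix.charpoly_reindex ℝ _ _ _ iDS iDS _ _ e.symm
        ((HeckeGraph n t).adjMatrix ℝ)).symm.trans
      ((congrArg _ hre).trans
        ((charpoly_congr_inst iDS _ _).trans (charpoly_fromBlocks_pair A)))
  rw [h1, Polynomial.roots_mul
      (mul_ne_zero (Matrix.charpoly_monic _).ne_zero (Matrix.charpoly_monic _).ne_zero),
    charpoly_neg_roots]
end Stmt17Aux

lemma Stmt17Aux.final (n : ℕ) (hn0 : n ≠ 0) (h1n : 1 < n) (t : ℤ) (u : (ZMod n)ˣ)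
    (hu : ((u : ZMod n)) = (t : ZMod n)) :
    spHecke n t = sp3 n + (sp3 n).map (fun lam => -lam) := by
  simp only [spHecke, sp3, heckeCharpoly, fareyCharpoly, dif_neg hn0]
  exact Stmt17Aux.key n h1n t u hu _ _ _ _ _

/-- For every odd `n ≥ 3`, the spectrum of the Hecke graph
`G4(n) = HeckeGraph n 2` is the multiset union of `sp3(n)` and `-sp3(n)`; the same holds
for `G6(n) = HeckeGraph n 3` whenever `n ≥ 2` is not divisible by `3`. -/
theorem stmt17 :
    (∀ n : ℕ, 3 ≤ n → Odd n →
      spHecke n 2 = sp3 n + (sp3 n).map (fun lam => -lam)) ∧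
    (∀ n : ℕ, 2 ≤ n → ¬ (3 ∣ n) →
      spHecke n 3 = sp3 n + (sp3 n).map (fun lam => -lam)) := by
  constructor
  · intro n hn hodd
    have hcop : Nat.Coprime 2 n := Nat.coprime_two_left.mpr hodd
    refine Stmt17Aux.final n (by omega) (by omega) 2 (ZMod.unitOfCoprime 2 hcop) ?_
    rw [ZMod.coe_unitOfCoprime]
    push_cast
    rfl
  · intro n hn h3
    have hcop : Nat.Coprime 3 n := (Nat.Prime.coprime_iff_not_dvd Nat.prime_three).mpr h3
    refine Stmt17Aux.final n (by omega) (by omega) 3 (ZMod.unitOfCoprime 3 hcop) ?_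
    rw [ZMod.coe_unitOfCoprime]
    push_cast
    rfl
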